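/- Let p be a prime and m ≥ 1 an integer. The number of points x ∈ [0,1] with g_p^m(x) = x and g_p^i(x) ≠ x for all 1 ≤ i < m (where g_p^i denotes the i-fold iterate) equals ∑_{d ∣ m} μ(m/d)·p^d, where μ is the Möbius function. -/

import Mathlib

/-- The continuous piecewise linear map `g_p : [0,1] → [0,1]` that goes up and down
`p` times: on `[k/p, (k+1)/p]` it is `x ↦ p·x − k` for `k` even and
`x ↦ k + 1 − p·x` for `k` odd. -/
noncomputable def gp (p : ℕ) (x : ℝ) : ℝ :=
  if Even ⌊(p : ℝ) * x⌋ then (p : ℝ) * x - ⌊(p : ℝ) * x⌋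
  else (⌊(p : ℝ) * x⌋ : ℝ) + 1 - (p : ℝ) * x

lemma gp_comp (p q : ℕ) {x : ℝ} (hx : x ∈ Set.Icc (0:ℝ) 1) :
    gp p (gp q x) = gp (p * q) x := by
  obtain ⟨hx0, hx1⟩ := hx
  set t : ℝ := (q:ℝ) * x with ht
  set k : ℤ := ⌊t⌋ with hk
  set f : ℝ := t - k with hf
  have hf0 : 0 ≤ f := by have := Int.floor_le t; simp [hf]; linarith
  have hf1 : f < 1 := by have := Int.lt_floor_add_one t; simp [hf]; linarith
  set j : ℤ := ⌊(p:ℝ) * f⌋ with hj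
  have hjle : (j:ℝ) ≤ (p:ℝ) * f := Int.floor_le _
  have hjlt : (p:ℝ) * f < j + 1 := Int.lt_floor_add_one _
  have hpq : ((p*q : ℕ):ℝ) * x = ((p:ℤ)*k : ℤ) + (p:ℝ)*f := by push_cast [hf]; ring
  have hfloorpq : ⌊((p*q:ℕ):ℝ) * x⌋ = (p:ℤ) * k + j := by
    rw [hpq, Int.floor_intCast_add, hj]
  have hgq : gp q x = if Even k then f else 1 - f := by
    unfold gp
    rw [← ht, ← hk]
    split_ifs with h
    · rw [hf]
    · rw [hf]; ring
  clear_value k j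
  rcases Int.even_or_odd k with hke | hko
  · -- k even
    have hk2 : k % 2 = 0 := Int.even_iff.mp hke
    have hgq' : gp q x = f := by simp [hgq, hke]
    rw [hgq']
    have hpar : Even ((p:ℤ) * k + j) ↔ Even j := by
      rw [Int.even_add, Int.even_mul]; simp only [Int.even_iff]; omega
    unfold gp
    rw [← hj, hfloorpq, hpq]
    by_cases hEj : Even j
    · rw [if_pos hEj, if_pos (hpar.mpr hEj)]; push_cast; ring
    · rw [if_neg hEj, if_neg (fun h => hEj (hpar.mp h))]; push_cast; ring
  · -- k odd
    have hk2 : k % 2 = 1 := Int.odd_iff.mp hko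
    have hgq' : gp q x = 1 - f := by
      rw [hgq, if_neg (Int.not_even_iff_odd.mpr hko)]
    rw [hgq']
    by_cases hint : (p:ℝ) * f = j
    · -- p f integer
      have hv : (p:ℝ) * (1 - f) = (((p:ℤ) - j : ℤ) : ℝ) := by push_cast; linarith
      have hfl : ⌊(p:ℝ) * (1 - f)⌋ = (p:ℤ) - j := by rw [hv, Int.floor_intCast]
      have hpar : Even ((p:ℤ) - j) ↔ Even ((p:ℤ) * k + j) := by
        rw [Int.even_sub, Int.even_add, Int.even_mul]; simp only [Int.even_iff]; omega
      unfold gp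
      rw [hfl, hfloorpq, hpq, hv]
      by_cases hE : Even ((p:ℤ) - j)
      · rw [if_pos hE, if_pos (hpar.mp hE)]; push_cast; rw [← hint]; ring
      · rw [if_neg hE, if_neg (fun h => hE (hpar.mpr h))]; push_cast; rw [← hint]; ring
    · -- p f not integer
      have hjlt' : (j:ℝ) < (p:ℝ) * f := lt_of_le_of_ne hjle (by simpa [eq_comm] using hint)
      have hfl : ⌊(p:ℝ) * (1 - f)⌋ = (p:ℤ) - j - 1 := by
        rw [Int.floor_eq_iff]
        refine ⟨by push_cast; linarith, by push_cast; linarith⟩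
      have hpar : Even ((p:ℤ) - j - 1) ↔ ¬ Even ((p:ℤ) * k + j) := by
        rw [Int.even_sub, Int.even_sub, Int.even_add, Int.even_mul]; simp only [Int.even_iff]; omega
      unfold gp
      rw [hfl, hfloorpq, hpq]
      by_cases hE : Even ((p:ℤ) - j - 1)
      · rw [if_pos hE, if_neg (hpar.mp hE)]; push_cast; ring
      · rw [if_neg hE, if_pos (not_not.mp (fun h => hE (hpar.mpr h)))]; push_cast; ring

/-- the candidate fixed points of `gp q` -/
noncomputable def cand (q k : ℕ) : ℝ :=
  if Even k then (k:ℝ)/((q:ℝ)-1) else ((k:ℝ)+1)/((q:ℝ)+1)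

lemma cand_mem_Icc {q k : ℕ} (hq : 2 ≤ q) (hk : k < q) :
    cand q k ∈ Set.Icc (0:ℝ) 1 := by
  have hq1 : (1:ℝ) ≤ (q:ℝ) - 1 := by
    have : (2:ℝ) ≤ (q:ℝ) := by exact_mod_cast hq
    linarith
  have hkq : (k:ℝ) ≤ (q:ℝ) - 1 := by
    have : (k:ℝ) + 1 ≤ (q:ℝ) := by exact_mod_cast hk
    linarith
  unfold cand
  split_ifs with h
  · exact ⟨by positivity, by rw [div_le_one (by linarith)]; linarith⟩
  · exact ⟨by positivity, by rw [div_le_one (by linarith)]; linarith⟩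

lemma gp_cand {q k : ℕ} (hq : 2 ≤ q) (hk : k < q) : gp q (cand q k) = cand q k := by
  have hq2 : (2:ℝ) ≤ (q:ℝ) := by exact_mod_cast hq
  have hq0 : (0:ℝ) < (q:ℝ) - 1 := by linarith
  have hq0' : (0:ℝ) < (q:ℝ) + 1 := by linarith
  have hkq : (k:ℝ) + 1 ≤ (q:ℝ) := by exact_mod_cast hk
  by_cases h : Even k
  · have hc : cand q k = (k:ℝ)/((q:ℝ)-1) := by simp [cand, h]
    rcases eq_or_lt_of_le hkq with heq | hlt
    · -- k = q - 1, x = 1, q odd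
      have hx1 : cand q k = 1 := by rw [hc]; rw [div_eq_one_iff_eq (by linarith)]; linarith
      have hfl : ⌊(q:ℝ) * (1:ℝ)⌋ = (q:ℤ) := by rw [mul_one, Int.floor_natCast]
      have hkq' : k + 1 = q := by exact_mod_cast heq
      have hqodd : ¬ Even ((q:ℤ)) := by
        rw [Int.even_coe_nat]
        rcases h with ⟨a, ha⟩
        rintro ⟨b, hb⟩
        omega
      rw [hx1]
      unfold gp
      rw [hfl, if_neg hqodd]
      push_cast
      ring
    · -- k < q - 1
      have hfl : ⌊(q:ℝ) * ((k:ℝ)/((q:ℝ)-1))⌋ = (k:ℤ) := by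
        rw [Int.floor_eq_iff]
        constructor
        · rw [mul_div_assoc', le_div_iff₀ hq0]
          push_cast
          nlinarith [Nat.cast_nonneg (α := ℝ) k]
        · rw [mul_div_assoc', div_lt_iff₀ hq0]
          push_cast
          nlinarith
      rw [hc]
      unfold gp
      rw [hfl, if_pos (by exact_mod_cast h)]
      push_cast
      field_simp
      ring
  · have hc : cand q k = ((k:ℝ)+1)/((q:ℝ)+1) := by simp [cand, h]
    have hfl : ⌊(q:ℝ) * (((k:ℝ)+1)/((q:ℝ)+1))⌋ = (k:ℤ) := by
      rw [Int.floor_eq_iff]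
      constructor
      · rw [mul_div_assoc', le_div_iff₀ hq0']
        push_cast
        nlinarith [Nat.cast_nonneg (α := ℝ) k]
      · rw [mul_div_assoc', div_lt_iff₀ hq0']
        push_cast
        nlinarith [Nat.cast_nonneg (α := ℝ) k]
    have hodd : ¬ Even ((k:ℤ)) := by
      rw [Int.even_coe_nat]; exact h
    rw [hc]
    unfold gp
    rw [hfl, if_neg hodd]
    field_simp
    push_cast; ring

lemma fixed_eq_cand {q : ℕ} (hq : 2 ≤ q) {x : ℝ} (hx : x ∈ Set.Icc (0:ℝ) 1)
    (hfix : gp q x = x) : ∃ k < q, cand q k = x := by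
  obtain ⟨hx0, hx1⟩ := hx
  have hq2 : (2:ℝ) ≤ (q:ℝ) := by exact_mod_cast hq
  set n : ℤ := ⌊(q:ℝ) * x⌋ with hn
  have hn0 : 0 ≤ n := Int.floor_nonneg.mpr (by positivity)
  have hnq : n ≤ (q:ℤ) := by
    have : (q:ℝ) * x ≤ ((q:ℤ):ℝ) := by push_cast; nlinarith
    calc n ≤ ⌊((q:ℤ):ℝ)⌋ := Int.floor_le_floor this
    _ = (q:ℤ) := Int.floor_intCast _
  have hnle : (n:ℝ) ≤ (q:ℝ) * x := Int.floor_le _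
  have hnlt : (q:ℝ) * x < n + 1 := Int.lt_floor_add_one _
  unfold gp at hfix
  rw [← hn] at hfix
  split_ifs at hfix with hEn
  · -- even branch : (q-1) x = n
    have hxe : ((q:ℝ) - 1) * x = n := by linarith
    have hnq' : n < (q:ℤ) := by
      rcases eq_or_lt_of_le hnq with heq | h
      · exfalso
        have hnR : (n:ℝ) = (q:ℝ) := by exact_mod_cast heq
        nlinarith
      · exact h
    refine ⟨n.toNat, ?_, ?_⟩
    · omega
    · have hEk : Even n.toNat := by
        rcases hEn with ⟨a, ha⟩
        exact ⟨a.toNat, by omega⟩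
      rw [cand, if_pos hEk]
      have hcast : ((n.toNat : ℕ) : ℝ) = (n:ℝ) := by
        have := Int.toNat_of_nonneg hn0
        exact_mod_cast congrArg (Int.cast : ℤ → ℝ) this
      rw [hcast, eq_comm, eq_div_iff (by linarith)]
      linarith
  · -- odd branch : (q+1) x = n + 1
    have hxe : ((q:ℝ) + 1) * x = n + 1 := by linarith
    rcases eq_or_lt_of_le hnq with heq | hnq'
    · -- n = q, x = 1, q odd
      have hnR : (n:ℝ) = (q:ℝ) := by exact_mod_cast heq
      have hx1' : x = 1 := by nlinarith
      have hqodd : ¬ Even (q:ℤ) := by rw [heq] at hEn; exact hEn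
      refine ⟨q - 1, by omega, ?_⟩
      have hEk : Even (q - 1) := by
        rw [Int.even_coe_nat] at hqodd
        rcases Nat.even_or_odd q with h | h
        · exact absurd h hqodd
        · rcases h with ⟨a, ha⟩; exact ⟨a, by omega⟩
      rw [cand, if_pos hEk, hx1']
      have : ((q - 1 : ℕ) : ℝ) = (q:ℝ) - 1 := by
        have : (1:ℕ) ≤ q := by omega
        push_cast [this]
        ring
      rw [this, div_self (by linarith)]
    · refine ⟨n.toNat, by omega, ?_⟩
      have hOk : ¬ Even n.toNat := by
        intro ⟨a, ha⟩
        exact hEn ⟨a, by omega⟩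
      rw [cand, if_neg hOk]
      have hcast : ((n.toNat : ℕ) : ℝ) = (n:ℝ) := by
        have := Int.toNat_of_nonneg hn0
        exact_mod_cast congrArg (Int.cast : ℤ → ℝ) this
      rw [hcast, eq_comm, eq_div_iff (by linarith)]
      linarith

lemma cand_strictMono {q : ℕ} (hq : 2 ≤ q) {a b : ℕ} (hab : a < b) (hb : b < q) :
    cand q a < cand q b := by
  have hq2 : (2:ℝ) ≤ (q:ℝ) := by exact_mod_cast hq
  have hq0 : (0:ℝ) < (q:ℝ) - 1 := by linarith
  have hq0' : (0:ℝ) < (q:ℝ) + 1 := by linarith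
  have habR : (a:ℝ) + 1 ≤ (b:ℝ) := by exact_mod_cast hab
  have hbR : (b:ℝ) + 1 ≤ (q:ℝ) := by exact_mod_cast hb
  have ha0 : (0:ℝ) ≤ (a:ℝ) := Nat.cast_nonneg a
  unfold cand
  split_ifs with h1 h2 h2
  · rw [div_lt_div_iff₀ hq0 hq0]; nlinarith
  · rw [div_lt_div_iff₀ hq0 hq0']; nlinarith
  · rw [div_lt_div_iff₀ hq0' hq0]; nlinarith
  · rw [div_lt_div_iff₀ hq0' hq0']; nlinarith

lemma fixed_set_eq {q : ℕ} (hq : 2 ≤ q) :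
    {x ∈ Set.Icc (0:ℝ) 1 | gp q x = x} = cand q '' ↑(Finset.range q) := by
  ext x
  simp only [Set.mem_setOf_eq, Set.mem_image, Finset.coe_range, Set.mem_Iio]
  constructor
  · rintro ⟨hx, hfix⟩
    obtain ⟨k, hk, hck⟩ := fixed_eq_cand hq hx hfix
    exact ⟨k, hk, hck⟩
  · rintro ⟨k, hk, rfl⟩
    exact ⟨cand_mem_Icc hq hk, gp_cand hq hk⟩

lemma ncard_fixed {q : ℕ} (hq : 2 ≤ q) :
    {x ∈ Set.Icc (0:ℝ) 1 | gp q x = x}.ncard = q := by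
  rw [fixed_set_eq hq, Set.ncard_image_of_injOn, Set.ncard_coe_finset, Finset.card_range]
  intro a ha b hb hab
  simp only [Finset.coe_range, Set.mem_Iio] at ha hb
  rcases lt_trichotomy a b with h | h | h
  · exact absurd hab (ne_of_lt (cand_strictMono hq h hb))
  · exact h
  · exact absurd hab.symm (ne_of_lt (cand_strictMono hq h ha))


lemma fixed_set_eq' {q : ℕ} (hq : 2 ≤ q) :
    ∃ s : Finset ℝ, {x ∈ Set.Icc (0:ℝ) 1 | gp q x = x} = ↑s := by
  classical
  exact ⟨(Finset.range q).image (cand q), by rw [fixed_set_eq hq, Finset.coe_image]⟩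

lemma gp_iterate (p : ℕ) {x : ℝ} (hx : x ∈ Set.Icc (0:ℝ) 1) :
    ∀ n, 1 ≤ n → (gp p)^[n] x = gp (p^n) x := by
  intro n hn
  induction n with
  | zero => omega
  | succ n ih =>
    rcases Nat.eq_zero_or_pos n with rfl | hn'
    · simp [pow_one]
    · rw [Function.iterate_succ_apply', ih hn', gp_comp p (p^n) hx, ← pow_succ']

/-- the set of points of exact period `d` -/
def Eset (p d : ℕ) : Set ℝ :=
  {x ∈ Set.Icc (0 : ℝ) 1 |
    (gp p)^[d] x = x ∧ ∀ i, 1 ≤ i → i < d → (gp p)^[i] x ≠ x}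

lemma sum_Eset (p : ℕ) (hp : 2 ≤ p) (n : ℕ) (hn : 0 < n) :
    ∑ d ∈ n.divisors, ((Eset p d).ncard : ℤ) = (p:ℤ)^n := by
  classical
  have hq : 2 ≤ p^n := le_trans hp (Nat.le_self_pow (by omega) p)
  have hSeq : {x ∈ Set.Icc (0:ℝ) 1 | (gp p)^[n] x = x}
      = {x ∈ Set.Icc (0:ℝ) 1 | gp (p^n) x = x} := by
    ext x
    exact ⟨fun ⟨h1, h2⟩ => ⟨h1, by rw [← gp_iterate p h1 n hn]; exact h2⟩,
      fun ⟨h1, h2⟩ => ⟨h1, by rw [gp_iterate p h1 n hn]; exact h2⟩⟩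
  obtain ⟨s, hs⟩ := fixed_set_eq' hq
  have hSfin : {x ∈ Set.Icc (0:ℝ) 1 | (gp p)^[n] x = x}.Finite := by
    rw [hSeq, hs]; exact s.finite_toSet
  set F : Finset ℝ := hSfin.toFinset with hF
  have hFcard : F.card = p^n := by
    rw [hF, ← Set.ncard_eq_toFinset_card _ hSfin, hSeq, ncard_fixed hq]
  have hmem : ∀ x ∈ F, Function.minimalPeriod (gp p) x ∈ n.divisors := by
    intro x hx
    rw [hF, Set.Finite.mem_toFinset] at hx
    obtain ⟨hx1, hx2⟩ := hx
    have hper : Function.IsPeriodicPt (gp p) n x := hx2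
    exact Nat.mem_divisors.mpr ⟨hper.minimalPeriod_dvd, by omega⟩
  have hsplit := Finset.card_eq_sum_card_fiberwise hmem
  have hEd : ∀ d ∈ n.divisors,
      Eset p d = ↑(F.filter fun x => Function.minimalPeriod (gp p) x = d) := by
    intro d hd
    obtain ⟨hdvd, hn0⟩ := Nat.mem_divisors.mp hd
    have hd1 : 1 ≤ d := Nat.pos_of_dvd_of_pos hdvd hn
    ext x
    simp only [Finset.coe_filter, Set.mem_setOf_eq, Finset.mem_coe, hF,
      Set.Finite.mem_toFinset, Eset]
    constructor
    · rintro ⟨hx1, hx2, hx3⟩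
      have hper : Function.IsPeriodicPt (gp p) d x := hx2
      have hmdvd : Function.minimalPeriod (gp p) x ∣ d := hper.minimalPeriod_dvd
      have hpos : 0 < Function.minimalPeriod (gp p) x :=
        hper.minimalPeriod_pos hd1
      have hmeq : Function.minimalPeriod (gp p) x = d := by
        rcases eq_or_lt_of_le (Nat.le_of_dvd hd1 hmdvd) with h | h
        · exact h
        · exact absurd Function.iterate_minimalPeriod (hx3 _ hpos h)
      refine ⟨⟨hx1, ?_⟩, hmeq⟩
      have : Function.IsPeriodicPt (gp p) n x := hper.trans_dvd hdvd
      exact this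
    · rintro ⟨⟨hx1, hx2⟩, hmeq⟩
      refine ⟨hx1, ?_, ?_⟩
      · rw [← hmeq]; exact Function.iterate_minimalPeriod
      · intro i hi1 hi2 hit
        exact Function.not_isPeriodicPt_of_pos_of_lt_minimalPeriod
          (by omega) (by rw [hmeq]; exact hi2) hit
  have : ∑ d ∈ n.divisors, ((Eset p d).ncard : ℤ)
      = ∑ d ∈ n.divisors,
        (((F.filter fun x => Function.minimalPeriod (gp p) x = d).card : ℕ) : ℤ) := by
    refine Finset.sum_congr rfl fun d hd => ?_
    rw [hEd d hd, Set.ncard_coe_finset]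
  rw [this, ← Nat.cast_sum, ← hsplit, hFcard]
  push_cast
  ring


/-- The number of points of `[0,1]` that are periodic of order `m` for `g_p` equals
`∑_{d ∣ m} μ(m/d)·p^d`. -/
theorem card_periodic_eq_moebius_sum (p m : ℕ) (hp : p.Prime) (hm : 1 ≤ m) :
    ({x ∈ Set.Icc (0 : ℝ) 1 |
        (gp p)^[m] x = x ∧ ∀ i, 1 ≤ i → i < m → (gp p)^[i] x ≠ x}.ncard : ℤ)
      = ∑ d ∈ m.divisors, ArithmeticFunction.moebius (m / d) * (p : ℤ) ^ d := by
  have key := (ArithmeticFunction.sum_eq_iff_sum_smul_moebius_eq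
    (R := ℤ) (f := fun d => ((Eset p d).ncard : ℤ)) (g := fun n => (p:ℤ)^n)).mp
    (fun n hn => sum_Eset p hp.two_le n hn) m (by omega)
  have hLHS : ({x ∈ Set.Icc (0 : ℝ) 1 |
        (gp p)^[m] x = x ∧ ∀ i, 1 ≤ i → i < m → (gp p)^[i] x ≠ x}.ncard : ℤ)
      = ((Eset p m).ncard : ℤ) := rfl
  rw [hLHS, ← key, ← Nat.map_div_left_divisors, Finset.sum_map]
  refine Finset.sum_congr rfl fun d hd => ?_
  simp only [smul_eq_mul]; rfl
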